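/- Let X be a finite alphabet, let P be a probability distribution on X with P(a) > 0 for all a ∈ X, and let ρ > 0. Then max_Q [ρ H(Q) − D(Q‖P)] = (1+ρ) log₂ ∑_{a∈X} P(a)^{1/(1+ρ)}, where the maximum is over all probability distributions Q on X, H(Q) = −∑_a Q(a) log₂ Q(a), and D(Q‖P) = ∑_a Q(a) log₂(Q(a)/P(a)). Equivalently, the optimal guessing exponent E(ρ) = max_Q[ρH(Q) − D(Q‖P)] equals ρ times the Rényi entropy of P of order 1/(1+ρ). -/
import Mathlib

open Finset Real

/-- `logb 2` is concave on `(0, ∞)`. -/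
lemma concaveOn_logb_two : ConcaveOn ℝ (Set.Ioi 0) (Real.logb 2) := by
  have h : ConcaveOn ℝ (Set.Ioi 0) (fun x => (Real.log 2)⁻¹ • Real.log x) :=
    ConcaveOn.smul (by positivity) _root_.strictConcaveOn_log_Ioi.concaveOn
  convert h using 2 with x
  simp [Real.logb, div_eq_inv_mul, smul_eq_mul]

/-- Gibbs-type inequality via Jensen: if `Q ≥ 0` sums to 1 and `r > 0` then
`∑ Q a * logb 2 (r a / Q a) ≤ logb 2 (∑ r a)`. -/
lemma gibbs_le {X : Type*} [Fintype X] (Q r : X → ℝ) (hQ : ∀ a, 0 ≤ Q a)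
    (hQsum : ∑ a : X, Q a = 1) (hr : ∀ a, 0 < r a) :
    ∑ a : X, Q a * Real.logb 2 (r a / Q a) ≤ Real.logb 2 (∑ a : X, r a) := by
  classical
  set t : Finset X := Finset.univ.filter (fun a => 0 < Q a) with ht
  have hmem : ∀ a ∈ t, 0 < Q a := fun a ha => (Finset.mem_filter.mp ha).2
  have hsum_t : ∑ a ∈ t, Q a = 1 := by
    rw [← hQsum]
    apply Finset.sum_filter_of_ne
    intro a _ h
    exact lt_of_le_of_ne (hQ a) (Ne.symm h)
  have hsum_eq : ∑ a : X, Q a * Real.logb 2 (r a / Q a)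
      = ∑ a ∈ t, Q a * Real.logb 2 (r a / Q a) := by
    symm
    apply Finset.sum_filter_of_ne
    intro a _ h
    rcases lt_of_le_of_ne (hQ a) (fun he => h (by rw [← he]; simp)) with hpos
    exact hpos
  -- hsum_eq wrong direction; fix: terms with Q a = 0 vanish
  have hjensen : ∑ a ∈ t, Q a • Real.logb 2 (r a / Q a)
      ≤ Real.logb 2 (∑ a ∈ t, Q a • (r a / Q a)) := by
    apply concaveOn_logb_two.le_map_sum (fun a ha => (hmem a ha).le) hsum_t
    intro a ha
    exact Set.mem_Ioi.mpr (div_pos (hr a) (hmem a ha))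
  have hpts : ∑ a ∈ t, Q a • (r a / Q a) = ∑ a ∈ t, r a := by
    apply Finset.sum_congr rfl
    intro a ha
    rw [smul_eq_mul, mul_div_cancel₀ _ (hmem a ha).ne']
  have htn : t.Nonempty := by
    by_contra h
    rw [Finset.not_nonempty_iff_eq_empty] at h
    rw [h, Finset.sum_empty] at hsum_t
    norm_num at hsum_t
  have hpos_t : 0 < ∑ a ∈ t, r a :=
    Finset.sum_pos (fun a _ => hr a) htn
  have hle : ∑ a ∈ t, r a ≤ ∑ a : X, r a :=
    Finset.sum_le_sum_of_subset_of_nonneg (Finset.subset_univ t)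
      (fun a _ _ => (hr a).le)
  calc ∑ a : X, Q a * Real.logb 2 (r a / Q a)
      = ∑ a ∈ t, Q a • Real.logb 2 (r a / Q a) := by
        rw [hsum_eq]; simp [smul_eq_mul]
    _ ≤ Real.logb 2 (∑ a ∈ t, Q a • (r a / Q a)) := hjensen
    _ = Real.logb 2 (∑ a ∈ t, r a) := by rw [hpts]
    _ ≤ Real.logb 2 (∑ a : X, r a) :=
        Real.logb_le_logb_of_le (by norm_num) hpos_t hle

/-- Identity (3) of the paper: `max_Q [ρ H(Q) − D(Q‖P)] = (1+ρ) log₂ ∑_a P(a)^{1/(1+ρ)}`,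
i.e. the optimal guessing exponent equals `ρ` times the Rényi entropy of order `1/(1+ρ)`. -/
theorem guessing_exponent_eq_renyi {X : Type*} [Fintype X]
    (P : X → ℝ) (hP : ∀ a, 0 < P a) (hPsum : ∑ a : X, P a = 1) (ρ : ℝ) (hρ : 0 < ρ) :
    IsGreatest
      {e : ℝ | ∃ Q : X → ℝ, (∀ a, 0 ≤ Q a) ∧ (∑ a : X, Q a) = 1 ∧
        e = ρ * (-∑ a : X, Q a * Real.logb 2 (Q a)) -
              ∑ a : X, Q a * Real.logb 2 (Q a / P a)}
      ((1 + ρ) * Real.logb 2 (∑ a : X, P a ^ (1 / (1 + ρ)))) := by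
  classical
  have hX : Nonempty X := by
    by_contra h
    rw [not_nonempty_iff] at h
    rw [Finset.univ_eq_empty, Finset.sum_empty] at hPsum
    norm_num at hPsum
  have h1ρ : (0:ℝ) < 1 + ρ := by linarith
  set β : ℝ := 1 / (1 + ρ) with hβ
  set r : X → ℝ := fun a => P a ^ β with hr
  have hrpos : ∀ a, 0 < r a := fun a => Real.rpow_pos_of_pos (hP a) β
  set Z : ℝ := ∑ a : X, r a with hZ
  have hZpos : 0 < Z := Finset.sum_pos (fun a _ => hrpos a) Finset.univ_nonempty
  -- key rewriting: the objective equals (1+ρ) ∑ Q a * logb 2 (r a / Q a)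
  have key : ∀ Q : X → ℝ, (∀ a, 0 ≤ Q a) →
      ρ * (-∑ a : X, Q a * Real.logb 2 (Q a)) - ∑ a : X, Q a * Real.logb 2 (Q a / P a)
        = (1 + ρ) * ∑ a : X, Q a * Real.logb 2 (r a / Q a) := by
    intro Q hQ
    have : ∀ a : X, -(ρ * (Q a * Real.logb 2 (Q a))) - Q a * Real.logb 2 (Q a / P a)
        = (1 + ρ) * (Q a * Real.logb 2 (r a / Q a)) := by
      intro a
      rcases eq_or_lt_of_le (hQ a) with h0 | hpos
      · rw [← h0]; simp
      · have hlog1 : Real.logb 2 (Q a / P a) = Real.logb 2 (Q a) - Real.logb 2 (P a) :=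
          Real.logb_div hpos.ne' (hP a).ne'
        have hlog2 : Real.logb 2 (r a / Q a) = β * Real.logb 2 (P a) - Real.logb 2 (Q a) := by
          rw [Real.logb_div (hrpos a).ne' hpos.ne']
          congr 1
          rw [hr]
          simp only [Real.logb]
          rw [Real.log_rpow (hP a)]
          ring
        rw [hlog1, hlog2]
        have hβmul : (1 + ρ) * β = 1 := by
          rw [hβ]; field_simp
        have hne : (1 + ρ) ≠ 0 := h1ρ.ne'
        rw [hβ]
        field_simp
        ring
    calc ρ * (-∑ a : X, Q a * Real.logb 2 (Q a)) - ∑ a : X, Q a * Real.logb 2 (Q a / P a)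
        = ∑ a : X, (-(ρ * (Q a * Real.logb 2 (Q a))) - Q a * Real.logb 2 (Q a / P a)) := by
          rw [Finset.sum_sub_distrib, Finset.sum_neg_distrib, ← Finset.mul_sum, mul_neg]
      _ = ∑ a : X, (1 + ρ) * (Q a * Real.logb 2 (r a / Q a)) :=
          Finset.sum_congr rfl (fun a _ => this a)
      _ = (1 + ρ) * ∑ a : X, Q a * Real.logb 2 (r a / Q a) := (Finset.mul_sum _ _ _).symm
  constructor
  · -- membership: take Q = r / Z
    refine ⟨fun a => r a / Z, fun a => (div_pos (hrpos a) hZpos).le, ?_, ?_⟩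
    · rw [← Finset.sum_div, ← hZ, div_self hZpos.ne']
    · rw [key _ (fun a => (div_pos (hrpos a) hZpos).le)]
      have : ∀ a : X, (r a / Z) * Real.logb 2 (r a / (r a / Z)) = (r a / Z) * Real.logb 2 Z := by
        intro a
        congr 1
        rw [div_div_eq_mul_div, mul_comm, mul_div_assoc, div_self (hrpos a).ne', mul_one]
      rw [Finset.sum_congr rfl (fun a _ => this a), ← Finset.sum_mul, ← Finset.sum_div,
        ← hZ, div_self hZpos.ne', one_mul]
  · -- upper bound
    rintro e ⟨Q, hQ, hQsum, rfl⟩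
    rw [key Q hQ]
    exact mul_le_mul_of_nonneg_left (gibbs_le Q r hQ hQsum hrpos) h1ρ.le
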